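/- Let V be a finite vertex set, let k be a positive integer, and let C be a spanning subgraph of a graph G on V such that κ(x,y;C) ≥ min{κ(x,y;G), k} for all vertices x, y ∈ V. Then for all vertices x, y ∈ V and every set S ⊆ V \ {x,y} of fewer than k vertices, if x and y lie in different connected components of C − S, then x and y lie in different connected components of G − S. -/

import Mathlib

/-- The local vertex-connectivity `κ(x,y;G)`: the maximum number of pairwise
internally vertex-disjoint paths between `x` and `y` in `G`. -/
noncomputable def localVertexConn {V : Type*} (G : SimpleGraph V) (x y : V) : ℕ :=
  sSup {n : ℕ | ∃ P : Fin n → G.Path x y, Function.Injective P ∧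
    Pairwise fun i j => ∀ v, v ∈ (P i).1.support → v ∈ (P j).1.support → v = x ∨ v = y}

section Aux

open SimpleGraph

variable {V : Type*} [Fintype V]

lemma lvc_zero_mem (G : SimpleGraph V) (x y : V) :
    0 ∈ {n : ℕ | ∃ P : Fin n → G.Path x y, Function.Injective P ∧
      Pairwise fun i j => ∀ v, v ∈ (P i).1.support → v ∈ (P j).1.support → v = x ∨ v = y} := by
  exact ⟨Fin.elim0, fun i => i.elim0, fun i => i.elim0⟩

lemma lvc_bddAbove (G : SimpleGraph V) (x y : V) :
    BddAbove {n : ℕ | ∃ P : Fin n → G.Path x y, Function.Injective P ∧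
      Pairwise fun i j => ∀ v, v ∈ (P i).1.support → v ∈ (P j).1.support → v = x ∨ v = y} := by
  classical
  refine ⟨Fintype.card (G.Path x y), ?_⟩
  rintro n ⟨P, hinj, -⟩
  simpa using Fintype.card_le_of_injective P hinj

/-- Easy direction of Menger: if every `x`–`y` walk in `C` meets `S` (and `x, y ∉ S`),
then the local connectivity is at most `|S|`. -/
lemma lvc_le_card (C : SimpleGraph V) (x y : V) (S : Finset V)
    (hx : x ∉ S) (hy : y ∉ S)
    (hsep : ∀ p : C.Walk x y, ∃ v ∈ p.support, v ∈ S) :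
    localVertexConn C x y ≤ S.card := by
  classical
  refine csSup_le ⟨0, lvc_zero_mem C x y⟩ ?_
  rintro n ⟨P, hinj, hdisj⟩
  choose f hfsup hfS using fun i => hsep (P i).1
  have hfinj : Function.Injective f := by
    intro i j hij
    by_contra hne
    rcases hdisj hne (f i) (hfsup i) (hij ▸ hfsup j) with h | h
    · exact hx (h ▸ hfS i)
    · exact hy (h ▸ hfS i)
  have : Function.Injective (fun i : Fin n => (⟨f i, hfS i⟩ : S)) := by
    intro i j h
    exact hfinj (congrArg Subtype.val h)
  simpa using Fintype.card_le_of_injective _ this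

/-- Adding a missing edge strictly increases local connectivity. -/
lemma lvc_lt {G C : SimpleGraph V} (hCG : C ≤ G) {a b : V}
    (hadj : G.Adj a b) (hnadj : ¬ C.Adj a b) :
    localVertexConn C a b < localVertexConn G a b := by
  classical
  have hmem := Nat.sSup_mem ⟨0, lvc_zero_mem C a b⟩ (lvc_bddAbove C a b)
  set n := localVertexConn C a b with hn
  obtain ⟨P, hinj, hdisj⟩ := hmem
  -- map paths to G
  let f : C →g G := SimpleGraph.Hom.ofLE hCG
  have hfinj : Function.Injective f := fun u v h => h
  let P' : Fin n → G.Path a b := fun i => (P i).map f hfinj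
  have hsupp : ∀ i, (P' i).1.support = (P i).1.support := by
    intro i
    show ((P i).1.map f).support = _
    rw [SimpleGraph.Walk.support_map]
    have hid : ⇑f = id := rfl
    rw [hid, List.map_id]
  -- the new family
  let Q : Fin (n + 1) → G.Path a b :=
    Fin.cases (SimpleGraph.Path.singleton hadj) P'
  have hQ0 : (Q 0).1 = SimpleGraph.Walk.cons hadj SimpleGraph.Walk.nil := rfl
  have hsing : ∀ i : Fin n, Q i.succ ≠ Q 0 := by
    intro i h
    have : s(a, b) ∈ (Q i.succ).1.edges := by
      rw [h, hQ0]; simp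
    have : s(a, b) ∈ (P i).1.edges := by
      have h2 : (Q i.succ).1 = (P i).1.map f := rfl
      rw [h2, SimpleGraph.Walk.edges_map] at this
      have hid : Sym2.map ⇑f = id := by
        funext e; induction e using Sym2.ind with | _ u v => rfl
      rwa [hid, List.map_id] at this
    exact hnadj ((P i).1.adj_of_mem_edges this)
  have hQinj : Function.Injective Q := by
    intro i j hij
    induction i using Fin.cases with
    | zero =>
      induction j using Fin.cases with
      | zero => rfl
      | succ j => exact absurd hij.symm (hsing j)
    | succ i =>
      induction j using Fin.cases with
      | zero => exact absurd hij (hsing i)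
      | succ j =>
        have : P' i = P' j := hij
        have := SimpleGraph.Path.map_injective hfinj a b this
        exact congrArg Fin.succ (hinj this)
  have hQdisj : Pairwise fun i j => ∀ v, v ∈ (Q i).1.support → v ∈ (Q j).1.support →
      v = a ∨ v = b := by
    intro i j hne
    induction i using Fin.cases with
    | zero =>
      intro v hv _
      rw [hQ0] at hv
      simpa using hv
    | succ i =>
      induction j using Fin.cases with
      | zero =>
        intro v _ hv
        rw [hQ0] at hv
        simpa using hv
      | succ j =>
        intro v hvi hvj
        have hne' : i ≠ j := fun h => hne (by rw [h])
        rw [show (Q i.succ) = P' i from rfl, hsupp i] at hvi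
        rw [show (Q j.succ) = P' j from rfl, hsupp j] at hvj
        exact hdisj hne' v hvi hvj
  have hmemG : n + 1 ∈ {m : ℕ | ∃ P : Fin m → G.Path a b, Function.Injective P ∧
      Pairwise fun i j => ∀ v, v ∈ (P i).1.support → v ∈ (P j).1.support → v = a ∨ v = b} :=
    ⟨Q, hQinj, hQdisj⟩
  have hG : n + 1 ≤ localVertexConn G a b := le_csSup (lvc_bddAbove G a b) hmemG
  omega

/-- A walk whose support lies in `s` lifts to reachability in the induced subgraph. -/
lemma reachable_induce_of_walk {G : SimpleGraph V} {s : Set V} :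
    ∀ {u v : V} (p : G.Walk u v), (∀ w ∈ p.support, w ∈ s) →
      ∀ (hu : u ∈ s) (hv : v ∈ s), (G.induce s).Reachable ⟨u, hu⟩ ⟨v, hv⟩ := by
  intro u v p
  induction p with
  | nil => intro _ hu hv; rfl
  | @cons u w v h q ih =>
    intro hsupp hu hv
    have hw : w ∈ s := hsupp w (by simp)
    have h1 : (G.induce s).Adj ⟨u, hu⟩ ⟨w, hw⟩ := h
    exact h1.reachable.trans
      (ih (fun z hz => hsupp z (by simp [hz])) hw hv)

lemma exists_bad_edge {V' : Type*} {G' : SimpleGraph V'} (Q : V' → Prop) :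
    ∀ {u w : V'} (p : G'.Walk u w), Q u → ¬ Q w →
      ∃ a b, G'.Adj a b ∧ Q a ∧ ¬ Q b := by
  intro u w p
  induction p with
  | nil => intro h h'; exact absurd h h'
  | @cons u z w hadj q ih =>
    intro hu hw
    by_cases h : Q z
    · exact ih h hw
    · exact ⟨u, z, hadj, hu, h⟩

end Aux

/-- If `C` is a spanning subgraph of `G` with `κ(x,y;C) ≥ min{κ(x,y;G), k}` for all
vertices `x, y`, then for all `x, y` and every set `S ⊆ V \ {x,y}` of fewer than `k`
vertices, if `x` and `y` lie in different connected components of `C − S`, then they lie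
in different connected components of `G − S`. -/
theorem stmt_0 {V : Type*} [Fintype V] (k : ℕ) (hk : 0 < k)
    (G C : SimpleGraph V) (hCG : C ≤ G)
    (hκ : ∀ x y : V, min (localVertexConn G x y) k ≤ localVertexConn C x y)
    (x y : V) (S : Finset V) (hx : x ∈ ((S : Set V))ᶜ) (hy : y ∈ ((S : Set V))ᶜ)
    (hS : S.card < k)
    (hsep : ¬ (C.induce ((S : Set V)ᶜ)).Reachable ⟨x, hx⟩ ⟨y, hy⟩) :
    ¬ (G.induce ((S : Set V)ᶜ)).Reachable ⟨x, hx⟩ ⟨y, hy⟩ := by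
  classical
  intro hreach
  set s : Set V := ((S : Set V))ᶜ with hs
  obtain ⟨p⟩ := hreach
  set Q : s → Prop := fun v => (C.induce s).Reachable ⟨x, hx⟩ v with hQ
  have hQx : Q ⟨x, hx⟩ := SimpleGraph.Reachable.refl _
  obtain ⟨a', b', hab, hQa, hQb⟩ := exists_bad_edge Q p hQx hsep
  set a : V := a'.1
  set b : V := b'.1
  have hGab : G.Adj a b := hab
  have hCab : ¬ C.Adj a b := by
    intro h
    exact hQb (hQa.trans (SimpleGraph.Adj.reachable
      (show (C.induce s).Adj a' b' from h)))
  have haS : a ∉ S := a'.2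
  have hbS : b ∉ S := b'.2
  have hsep' : ∀ q : C.Walk a b, ∃ v ∈ q.support, v ∈ S := by
    intro q
    by_contra h
    push_neg at h
    have hmem : ∀ w ∈ q.support, w ∈ s := fun w hw => (h w hw : w ∉ (S : Set V))
    have := reachable_induce_of_walk q hmem a'.2 b'.2
    exact hQb (hQa.trans this)
  have h1 : localVertexConn C a b ≤ S.card := lvc_le_card C a b S haS hbS hsep'
  have h2 : localVertexConn C a b < localVertexConn G a b := lvc_lt hCG hGab hCab
  have h3 := hκ a b
  omega
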